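/- Let A be a positive definite symmetric n×n real matrix, v ∈ ℝ^n, and p ≥ 2. Then |A^{1/p} v|^p ≤ |v|^{p−2} |A^{1/2} v|^2. -/

import Mathlib

open Matrix

/-- The `r`-th power of a Hermitian matrix, via the spectral decomposition. -/
noncomputable def matRpow {n : ℕ} {A : Matrix (Fin n) (Fin n) ℝ}
    (hA : A.IsHermitian) (r : ℝ) : Matrix (Fin n) (Fin n) ℝ :=
  (hA.eigenvectorUnitary : Matrix (Fin n) (Fin n) ℝ) *
    Matrix.diagonal (fun i => (hA.eigenvalues i) ^ r) *
      (star hA.eigenvectorUnitary : Matrix (Fin n) (Fin n) ℝ)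

lemma unit_norm_aux {n : ℕ} (U : Matrix (Fin n) (Fin n) ℝ) (hU : Uᵀ * U = 1) (x : Fin n → ℝ) :
    ∑ i, (U.mulVec x i)^2 = ∑ i, x i ^ 2 := by
  have : ∑ i, (U.mulVec x i)^2 = (U *ᵥ x) ⬝ᵥ (U *ᵥ x) := by
    simp [dotProduct, sq]
  rw [this, dotProduct_mulVec, ← vecMul_transpose, vecMul_vecMul, hU, vecMul_one]
  simp [dotProduct, sq]

lemma norm_sq_matRpow {n : ℕ} {A : Matrix (Fin n) (Fin n) ℝ}
    (hA : A.IsHermitian) (hpos : A.PosDef) (r : ℝ) (v : Fin n → ℝ) :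
    ∑ i, ((matRpow hA r).mulVec v i) ^ 2 =
      ∑ i, (hA.eigenvalues i) ^ (2 * r) *
        ((star hA.eigenvectorUnitary : Matrix (Fin n) (Fin n) ℝ).mulVec v i) ^ 2 := by
  set U : Matrix (Fin n) (Fin n) ℝ := (hA.eigenvectorUnitary : Matrix (Fin n) (Fin n) ℝ) with hUdef
  have hU : Uᵀ * U = 1 := by
    have := Unitary.coe_star_mul_self hA.eigenvectorUnitary
    simpa [hUdef, star_eq_conjTranspose] using this
  set w : Fin n → ℝ := (star U) *ᵥ v with hw
  have h1 : (matRpow hA r) *ᵥ v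
      = U *ᵥ ((Matrix.diagonal (fun i => (hA.eigenvalues i) ^ r)) *ᵥ w) := by
    simp [matRpow, hw, ← mulVec_mulVec, hUdef]
  rw [h1, unit_norm_aux U hU]
  congr 1
  ext i
  rw [mulVec_diagonal, mul_pow, ← Real.rpow_natCast (hA.eigenvalues i ^ r) 2,
    ← Real.rpow_mul (hpos.eigenvalues_pos i).le]
  ring_nf

lemma key_ineq {n : ℕ} (lam μ : Fin n → ℝ) (hlam : ∀ i, 0 ≤ lam i) (hμ : ∀ i, 0 ≤ μ i)
    {p : ℝ} (hp : 2 ≤ p) :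
    ∑ i, lam i ^ (2 / p) * μ i ≤
      (∑ i, μ i) ^ (1 - 2 / p) * (∑ i, lam i * μ i) ^ (2 / p) := by
  have hp0 : (0:ℝ) < p := by linarith
  have hp2 : (1:ℝ) ≤ p / 2 := by linarith
  have h := Real.inner_le_weight_mul_Lp_of_nonneg Finset.univ hp2 μ
    (fun i => lam i ^ (2 / p)) hμ (fun i => Real.rpow_nonneg (hlam i) _)
  have hinv : (p / 2)⁻¹ = 2 / p := by rw [inv_div]
  rw [hinv] at h
  have hmul : 2 / p * (p / 2) = 1 := by field_simp
  have heq : ∀ i : Fin n, μ i * (lam i ^ (2/p)) ^ (p/2) = lam i * μ i := by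
    intro i
    rw [← Real.rpow_mul (hlam i), hmul, Real.rpow_one, mul_comm]
  simp only [heq] at h
  calc ∑ i, lam i ^ (2 / p) * μ i = ∑ i, μ i * lam i ^ (2 / p) := by
        simp [mul_comm]
    _ ≤ _ := h

theorem matrix_root_norm_ineq {n : ℕ} {A : Matrix (Fin n) (Fin n) ℝ}
    (hA : A.IsHermitian) (hpos : A.PosDef) (v : Fin n → ℝ) (p : ℝ) (hp : 2 ≤ p) :
    Real.sqrt (∑ i, ((matRpow hA (1 / p)).mulVec v i) ^ 2) ^ p ≤
      Real.sqrt (∑ i, (v i) ^ 2) ^ (p - 2) *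
        Real.sqrt (∑ i, ((matRpow hA (1 / 2)).mulVec v i) ^ 2) ^ 2 := by
  have hp0 : (0:ℝ) < p := by linarith
  set U : Matrix (Fin n) (Fin n) ℝ := (hA.eigenvectorUnitary : Matrix (Fin n) (Fin n) ℝ) with hUdef
  set w : Fin n → ℝ := (star U) *ᵥ v with hw
  set lam : Fin n → ℝ := hA.eigenvalues with hlamdef
  have hlam : ∀ i, 0 ≤ lam i := fun i => (hpos.eigenvalues_pos i).le
  set μ : Fin n → ℝ := fun i => w i ^ 2 with hμdef
  have hμ : ∀ i, 0 ≤ μ i := fun i => sq_nonneg _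
  -- rewrite the three sums
  have hSa : ∑ i, ((matRpow hA (1 / p)).mulVec v i) ^ 2 = ∑ i, lam i ^ (2 / p) * μ i := by
    rw [norm_sq_matRpow hA hpos (1 / p) v]
    congr 1; ext i
    rw [mul_one_div]
  have hSh : ∑ i, ((matRpow hA (1 / 2)).mulVec v i) ^ 2 = ∑ i, lam i * μ i := by
    rw [norm_sq_matRpow hA hpos (1 / 2) v]
    congr 1; ext i
    norm_num
    rfl
  have hSv : ∑ i, (v i) ^ 2 = ∑ i, μ i := by
    have hU2 : (star U)ᵀ * (star U) = 1 := by
      have := Unitary.coe_mul_star_self hA.eigenvectorUnitary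
      simpa [hUdef, star_eq_conjTranspose] using this
    rw [hμdef, hw, ← unit_norm_aux (star U) hU2 v]
  rw [hSa, hSh, hSv]
  have hSa0 : 0 ≤ ∑ i, lam i ^ (2/p) * μ i :=
    Finset.sum_nonneg fun i _ => mul_nonneg (Real.rpow_nonneg (hlam i) _) (hμ i)
  have hSv0 : 0 ≤ ∑ i, μ i := Finset.sum_nonneg fun i _ => hμ i
  have hSh0 : 0 ≤ ∑ i, lam i * μ i :=
    Finset.sum_nonneg fun i _ => mul_nonneg (hlam i) (hμ i)
  have key := key_ineq lam μ hlam hμ hp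
  have main := Real.rpow_le_rpow hSa0 key (by positivity : (0:ℝ) ≤ p/2)
  rw [Real.mul_rpow (Real.rpow_nonneg hSv0 _) (Real.rpow_nonneg hSh0 _),
    ← Real.rpow_mul hSv0, ← Real.rpow_mul hSh0] at main
  have e1 : (1 - 2/p) * (p/2) = 1/2 * (p - 2) := by field_simp
  have e2 : 2/p * (p/2) = 1 := by field_simp
  rw [e1, e2, Real.rpow_one] at main
  rw [Real.sq_sqrt hSh0, Real.sqrt_eq_rpow, Real.sqrt_eq_rpow,
    ← Real.rpow_mul hSa0, ← Real.rpow_mul hSv0]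
  have e3 : 1/2 * p = p/2 := by ring
  rw [e3]
  exact main
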